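/- arXiv:2404.10266 — 2 statements merged into one kernel-verified Lean document; each statement's English description precedes it below -/
import Mathlib

section
/- Let G be a simple, simply-connected complex algebraic group for which Kostant's conjecture holds (i.e., for λ ∈ P⁺, V(λ) ⊂ V(ρ)⊗V(ρ) if and only if λ ≤ 2ρ); in particular this is the case for G = SL_n(ℂ) and for G of exceptional type. Then for any dominant integral weight λ ∈ P⁺, V(λ) occurs as an irreducible subrepresentation of H•(G/B, ∧•𝒯_{G/B}) ≅ HH•(G/B) if and only if λ ≤ 2ρ in the dominance order, and in that case it occurs with multiplicity at least m_λ > 0, where m_λ is the multiplicity of V(λ) in V(ρ) ⊗ V(ρ). -/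
open scoped BigOperators

namespace KostantHH

/-- The integral weight lattice of a rank-`ℓ` simple, simply-connected group /
simple Lie algebra, written in fundamental-weight coordinates (so the
fundamental weights `ϖᵢ` are the standard basis vectors, and pairing a weight
with the `i`-th simple coroot is taking its `i`-th coordinate). -/
abbrev P (ℓ : ℕ) := Fin ℓ → ℤ

/-- The group algebra `ℤ[P]` of the weight lattice. -/
abbrev R (ℓ : ℕ) := AddMonoidAlgebra ℤ (P ℓ)

/-- `e μ` is the basis element `e^μ` of `ℤ[P]`. -/
noncomputable def e {ℓ : ℕ} (μ : P ℓ) : R ℓ := AddMonoidAlgebra.single μ 1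

/-- The Weyl vector `ρ = ϖ₁ + ⋯ + ϖ_ℓ`, i.e. `(1,…,1)` in fundamental-weight
coordinates. -/
def ρ {ℓ : ℕ} : P ℓ := fun _ => 1

/-- A weight is dominant iff all its fundamental-weight coordinates (= pairings
with the simple coroots) are nonnegative. -/
def dominant {ℓ : ℕ} (lam : P ℓ) : Prop := ∀ i, 0 ≤ lam i

/-- The combinatorial root datum of a finite-dimensional simple complex Lie
algebra `𝔤` of rank `ℓ`: the simple roots `α i` (written in fundamental-weight
coordinates, so that `α i j = ⟨α i, αⱼ^∨⟩` is the Cartan matrix) and the set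
`Φpos` of positive roots, whose sum is `2ρ`. -/
structure RootDatum (ℓ : ℕ) where
  α : Fin ℓ → P ℓ
  cartan_diag : ∀ i, α i i = 2
  cartan_offdiag : ∀ i j, i ≠ j → α i j ≤ 0
  Φpos : Finset (P ℓ)
  simple_mem : ∀ i, α i ∈ Φpos
  pos_in_cone : ∀ β ∈ Φpos, ∃ c : Fin ℓ → ℕ, β = ∑ i, (c i : ℤ) • α i
  sum_pos_roots : ∑ β ∈ Φpos, β = (2 : ℤ) • ρ

/-- The dominance (Bruhat–Chevalley) order on weights: `λ ≤ μ` iff `μ - λ` is a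
nonnegative integral combination of the simple roots (i.e. lies in `Q⁺`). -/
def domle {ℓ : ℕ} (S : RootDatum ℓ) (lam mu : P ℓ) : Prop :=
  ∃ c : Fin ℓ → ℕ, mu - lam = ∑ i, (c i : ℤ) • S.α i

/-- The simple reflection `sᵢ(μ) = μ - ⟨μ, αᵢ^∨⟩ αᵢ`, as an automorphism of the
weight lattice. -/
def sRefl {ℓ : ℕ} (S : RootDatum ℓ) (i : Fin ℓ) : AddAut (P ℓ) where
  toFun μ := μ - μ i • S.α i
  invFun μ := μ - μ i • S.α i
  left_inv := by
    intro μ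
    funext j
    simp only [Pi.sub_apply, Pi.smul_apply, smul_eq_mul]
    rw [S.cartan_diag i]
    ring
  right_inv := by
    intro μ
    funext j
    simp only [Pi.sub_apply, Pi.smul_apply, smul_eq_mul]
    rw [S.cartan_diag i]
    ring
  map_add' := by
    intro μ ν
    funext j
    simp only [Pi.add_apply, Pi.sub_apply, Pi.smul_apply, smul_eq_mul]
    ring

/-- The Weyl group `W`, realized as the subgroup of automorphisms of the weight
lattice generated by the simple reflections. -/
def Wgrp {ℓ : ℕ} (S : RootDatum ℓ) : AddSubgroup (AddAut (P ℓ)) :=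
  AddSubgroup.closure (Set.range (sRefl S))

/-- `w₀` is the longest element of the Weyl group: the (unique) element sending
all positive roots to negative roots. -/
def IsLongest {ℓ : ℕ} (S : RootDatum ℓ) (w₀ : AddAut (P ℓ)) : Prop :=
  w₀ ∈ Wgrp S ∧ ∀ β ∈ S.Φpos, -(w₀ β) ∈ S.Φpos

/-- The action of a Weyl group element on the group algebra `ℤ[P]`,
`w(e^μ) := e^{w μ}`. -/
noncomputable def wact {ℓ : ℕ} (w : AddAut (P ℓ)) (f : R ℓ) : R ℓ :=
  AddMonoidAlgebra.ofCoeff (Finsupp.mapDomain (⇑w) f.coeff)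

/-- The involution `◇` of `ℤ[P]`, determined by `◇(e^μ) = e^{-μ}`. -/
noncomputable def dia {ℓ : ℕ} (f : R ℓ) : R ℓ :=
  AddMonoidAlgebra.ofCoeff (Finsupp.mapDomain (fun μ : P ℓ => -μ) f.coeff)

/-- The shifted (dot) action of the Weyl group on weights:
`w · λ = w(λ + ρ) - ρ`. -/
def dot {ℓ : ℕ} (w : AddAut (P ℓ)) (lam : P ℓ) : P ℓ := w (lam + ρ) - ρ

/-- `D` is the `i`-th Demazure operator `Dᵢ(f) = (f - e^{-αᵢ}·sᵢ(f))/(1 - e^{-αᵢ})`,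
characterized by the equation `Dᵢ(f)·(1 - e^{-αᵢ}) = f - e^{-αᵢ}·sᵢ(f)`. -/
def IsDemazure {ℓ : ℕ} (S : RootDatum ℓ) (i : Fin ℓ) (D : Module.End ℤ (R ℓ)) : Prop :=
  ∀ f : R ℓ, D f * (1 - e (-(S.α i))) = f - e (-(S.α i)) * wact (sRefl S i) f

/-- `Dw0` is the Demazure operator `D_{w₀} = D_{i₁} ∘ ⋯ ∘ D_{i_k}` attached to a
reduced word `w₀ = s_{i₁} ⋯ s_{i_k}` for the longest element `w₀` (a word for
`w₀` is reduced iff its length is `#Φ⁺ = ℓ(w₀)`). -/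
def IsDw0 {ℓ : ℕ} (S : RootDatum ℓ) (w₀ : AddAut (P ℓ))
    (Dw0 : Module.End ℤ (R ℓ)) : Prop :=
  ∃ (word : List (Fin ℓ)) (D : Fin ℓ → Module.End ℤ (R ℓ)),
    (∀ i, IsDemazure S i (D i)) ∧
    (word.map (sRefl S)).sum = w₀ ∧
    word.length = S.Φpos.card ∧
    Dw0 = (word.map D).prod

/-- The characters of the finite-dimensional irreducible highest weight
`𝔤`-modules `V(λ)`: `chV λ = ch V(λ) = ∑_μ (dim V(λ)_μ) e^μ ∈ ℤ[P]` for
dominant `λ`.  The recorded axioms express that `V(λ)` is a `𝔤`-module with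
highest weight `λ` occurring with multiplicity one: weight multiplicities are
nonnegative, the coefficient of `e^λ` is `1`, all weights are `≤ λ` in
dominance order, and the character is Weyl-group invariant. -/
structure CharTheory {ℓ : ℕ} (S : RootDatum ℓ) where
  chV : P ℓ → R ℓ
  chV_coeff_nonneg : ∀ lam μ, 0 ≤ (chV lam).coeff μ
  chV_self : ∀ lam, dominant lam → (chV lam).coeff lam = 1
  chV_support_le : ∀ lam, dominant lam → ∀ μ ∈ (chV lam).coeff.support, domle S μ lam
  chV_invariant : ∀ lam, dominant lam → ∀ i, wact (sRefl S i) (chV lam) = chV lam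

/-- `g ∈ ℤ[P]` is the character of a finite-dimensional `𝔤`-module, i.e. a sum
of characters of irreducibles `V(μ)` with `μ` dominant. -/
def IsChar {ℓ : ℕ} {S : RootDatum ℓ} (T : CharTheory S) (g : R ℓ) : Prop :=
  ∃ l : List (P ℓ), (∀ μ ∈ l, dominant μ) ∧ g = (l.map T.chV).sum

/-- The irreducible `V(λ)` occurs with multiplicity at least `m` in the
(semisimple, finite-dimensional) `𝔤`-module with character `g`. -/
def OccursWithMult {ℓ : ℕ} {S : RootDatum ℓ} (T : CharTheory S) (m : ℕ)
    (lam : P ℓ) (g : R ℓ) : Prop :=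
  ∃ h : R ℓ, IsChar T h ∧ g = (m : ℤ) • T.chV lam + h

/-- The irreducible `V(λ)` occurs as a subrepresentation of the (semisimple,
finite-dimensional) `𝔤`-module with character `g`. -/
def Occurs {ℓ : ℕ} {S : RootDatum ℓ} (T : CharTheory S) (lam : P ℓ) (g : R ℓ) : Prop :=
  OccursWithMult T 1 lam g


-- ===================== auxiliary lemmas =====================
section Aux

variable {ℓ : ℕ}

open Finset in
/-- cone membership -/
def inQ (S : RootDatum ℓ) (x : P ℓ) : Prop :=
  ∃ c : Fin ℓ → ℕ, x = ∑ i, (c i : ℤ) • S.α i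

lemma inQ_zero (S : RootDatum ℓ) : inQ S 0 := ⟨0, by simp⟩

lemma inQ_add {S : RootDatum ℓ} {x y : P ℓ} (hx : inQ S x) (hy : inQ S y) :
    inQ S (x + y) := by
  obtain ⟨c, hc⟩ := hx; obtain ⟨d, hd⟩ := hy
  refine ⟨c + d, ?_⟩
  rw [hc, hd, ← Finset.sum_add_distrib]
  refine Finset.sum_congr rfl fun i _ => ?_
  push_cast [Pi.add_apply]
  rw [add_smul]

lemma inQ_nsmul {S : RootDatum ℓ} {x : P ℓ} (hx : inQ S x) (n : ℕ) :
    inQ S (n • x) := by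
  induction n with
  | zero => simpa using inQ_zero S
  | succ k ih => rw [succ_nsmul]; exact inQ_add ih hx

lemma inQ_sum {S : RootDatum ℓ} {ι : Type*} (B : Finset ι) (f : ι → P ℓ)
    (h : ∀ b ∈ B, inQ S (f b)) : inQ S (∑ b ∈ B, f b) :=
  Finset.sum_induction f (inQ S) (fun _ _ => inQ_add) (inQ_zero S) h

lemma inQ_posroot {S : RootDatum ℓ} {β : P ℓ} (hβ : β ∈ S.Φpos) : inQ S β :=
  S.pos_in_cone β hβ

lemma inQ_sigma {S : RootDatum ℓ} {B : Finset (P ℓ)} (hB : B ⊆ S.Φpos) :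
    inQ S (∑ β ∈ B, β) :=
  inQ_sum B _ fun _ hb => inQ_posroot (hB hb)

lemma sigma_compl {S : RootDatum ℓ} {B : Finset (P ℓ)} (hB : B ⊆ S.Φpos) :
    ∑ β ∈ S.Φpos \ B, β = (2 : ℤ) • ρ - ∑ β ∈ B, β := by
  classical
  rw [← S.sum_pos_roots, eq_sub_iff_add_eq, Finset.sum_sdiff hB]

lemma domle_iff (S : RootDatum ℓ) (lam mu : P ℓ) :
    domle S lam mu ↔ inQ S (mu - lam) := Iff.rfl

lemma domle_trans {S : RootDatum ℓ} {a b c : P ℓ}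
    (h1 : domle S a b) (h2 : domle S b c) : domle S a c := by
  rw [domle_iff] at *
  have := inQ_add h1 h2
  rwa [show b - a + (c - b) = c - a by ring] at this

lemma e_mul (a b : P ℓ) : e a * e b = e (a + b) := by
  simp [e, AddMonoidAlgebra.single_mul_single]

lemma e_prod {ι : Type*} (B : Finset ι) (f : ι → P ℓ) :
    ∏ b ∈ B, e (f b) = e (∑ b ∈ B, f b) := by
  classical
  induction B using Finset.induction_on with
  | empty => simp [e]; rfl
  | insert a s hx ih => rw [Finset.prod_insert hx, ih, e_mul, Finset.sum_insert hx]

lemma e_apply (a x : P ℓ) : (e a).coeff x = if a = x then 1 else 0 := by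
  classical
  simp [e, AddMonoidAlgebra.coeff_single_apply, Finsupp.single_apply]

-- ===== wact lemmas =====

lemma wact_mul (w v : AddAut (P ℓ)) (f : R ℓ) :
    wact (w + v) f = wact w (wact v f) := by
  unfold wact
  simp only [AddMonoidAlgebra.coeff_ofCoeff]
  rw [← Finsupp.mapDomain_comp]
  rfl

lemma wact_one (f : R ℓ) : wact (0 : AddAut (P ℓ)) f = f := by
  unfold wact
  show AddMonoidAlgebra.ofCoeff (Finsupp.mapDomain id f.coeff) = f
  rw [Finsupp.mapDomain_id]

lemma wact_apply (w : AddAut (P ℓ)) (f : R ℓ) (μ : P ℓ) :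
    (wact w f).coeff (w μ) = f.coeff μ :=
  Finsupp.mapDomain_apply (AddEquiv.injective w) f.coeff μ

lemma wact_fixed_of_mem {S : RootDatum ℓ} {f : R ℓ}
    (hf : ∀ i, wact (sRefl S i) f = f) {w : AddAut (P ℓ)} (hw : w ∈ Wgrp S) :
    wact w f = f := by
  induction hw using AddSubgroup.closure_induction with
  | mem x hx => obtain ⟨i, rfl⟩ := hx; exact hf i
  | zero => exact wact_one f
  | add x y hx hy ihx ihy => rw [wact_mul, ihy, ihx]
  | neg x hx ih =>
      conv_lhs => rw [← ih]
      rw [← wact_mul, neg_add_cancel, wact_one]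

lemma chV_wfixed {S : RootDatum ℓ} (T : CharTheory S) {lam : P ℓ}
    (hlam : dominant lam) {w : AddAut (P ℓ)} (hw : w ∈ Wgrp S) :
    wact w (T.chV lam) = T.chV lam :=
  wact_fixed_of_mem (T.chV_invariant lam hlam) hw

lemma chV_apply_w {S : RootDatum ℓ} (T : CharTheory S) {lam : P ℓ}
    (hlam : dominant lam) {w : AddAut (P ℓ)} (hw : w ∈ Wgrp S) (μ : P ℓ) :
    (T.chV lam).coeff (w μ) = (T.chV lam).coeff μ := by
  conv_lhs => rw [← chV_wfixed T hlam hw]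
  exact wact_apply w (T.chV lam) μ

end Aux


section Aux2
variable {ℓ : ℕ}

lemma negw0_inQ {S : RootDatum ℓ} {w₀ : AddAut (P ℓ)} (hw₀ : IsLongest S w₀)
    {x : P ℓ} (hx : inQ S x) : inQ S (-(w₀ x)) := by
  obtain ⟨c, rfl⟩ := hx
  have h1 : -(w₀ (∑ i, (c i : ℤ) • S.α i)) = ∑ i, c i • (-(w₀ (S.α i))) := by
    rw [map_sum]
    rw [← Finset.sum_neg_distrib]
    refine Finset.sum_congr rfl fun i _ => ?_
    rw [map_zsmul, natCast_zsmul, ← smul_neg]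
  rw [h1]
  exact inQ_sum _ _ fun i _ =>
    inQ_nsmul (inQ_posroot (hw₀.2 _ (S.simple_mem i))) (c i)

lemma w0_rho {S : RootDatum ℓ} {w₀ : AddAut (P ℓ)} (hw₀ : IsLongest S w₀) :
    w₀ ρ = -ρ := by
  classical
  have hinj : Set.InjOn (fun β => -(w₀ β)) S.Φpos := by
    intro a _ b _ h
    simpa using w₀.injective (neg_injective h)
  have himg : S.Φpos.image (fun β => -(w₀ β)) = S.Φpos := by
    refine Finset.eq_of_subset_of_card_le ?_ ?_
    · intro x hx
      obtain ⟨β, hβ, rfl⟩ := Finset.mem_image.1 hx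
      exact hw₀.2 β hβ
    · rw [Finset.card_image_of_injOn hinj]
  have hsum : ∑ β ∈ S.Φpos, (-(w₀ β)) = (2 : ℤ) • ρ := by
    calc ∑ β ∈ S.Φpos, (-(w₀ β))
        = ∑ x ∈ S.Φpos.image (fun β => -(w₀ β)), x :=
          (Finset.sum_image (f := fun x => x) (g := fun β => -(w₀ β)) fun a ha b hb => hinj ha hb).symm
      _ = (2:ℤ) • ρ := by rw [himg, S.sum_pos_roots]
  have h2 : -(w₀ ((2:ℤ) • ρ)) = (2:ℤ) • ρ := by
    calc -(w₀ ((2:ℤ) • ρ)) = ∑ β ∈ S.Φpos, (-(w₀ β)) := by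
          rw [← S.sum_pos_roots, map_sum]
          exact (Finset.sum_neg_distrib ..).symm
      _ = (2:ℤ) • ρ := hsum
  have h2' : w₀ ((2:ℤ) • ρ) = -((2:ℤ) • ρ) := neg_eq_iff_eq_neg.mp h2
  have h3 : (2:ℤ) • (w₀ ρ) = -((2:ℤ) • ρ) := by rw [← map_zsmul, h2']
  funext i
  have h4 := congrFun h3 i
  simp only [Pi.smul_apply, smul_eq_mul, Pi.neg_apply, ρ] at h4
  show w₀ ρ i = (-ρ) i
  simp only [Pi.neg_apply, ρ]
  omega

/-- pointedness of the positive cone -/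
lemma pointed (S : RootDatum ℓ) (c : Fin ℓ → ℕ)
    (hc : ∑ j, (c j : ℤ) • S.α j = 0) : ∀ j, c j = 0 := by
  classical
  by_contra hno
  push_neg at hno
  obtain ⟨j₀, hj₀⟩ := hno
  obtain ⟨N, hNeq⟩ : inQ S ((2:ℤ) • ρ) := by
    rw [← S.sum_pos_roots]; exact inQ_sigma (subset_refl _)
  -- coordinate versions over ℚ
  have hcoord : ∀ k, ∑ j, (c j : ℚ) * (S.α j k : ℚ) = 0 := by
    intro k
    have h := congrFun hc k
    simp only [Finset.sum_apply, Pi.smul_apply, smul_eq_mul, Pi.zero_apply] at h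
    exact_mod_cast h
  have hNcoord : ∀ k, ∑ i, (N i : ℚ) * (S.α i k : ℚ) = 2 := by
    intro k
    have h := congrFun hNeq k
    simp only [Finset.sum_apply, Pi.smul_apply, smul_eq_mul, ρ] at h
    have h' : (2:ℤ) = ∑ i, (N i : ℤ) * S.α i k := by simpa using h
    exact_mod_cast h'.symm
  set M := (Matrix.of (fun i k => (S.α i k : ℚ)) : Matrix (Fin ℓ) (Fin ℓ) ℚ) with hM
  have hdetT : M.transpose.det = 0 := by
    rw [← Matrix.exists_mulVec_eq_zero_iff]
    refine ⟨fun j => (c j : ℚ), ?_, ?_⟩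
    · intro h
      have := congrFun h j₀
      simp only [Pi.zero_apply, Nat.cast_eq_zero] at this
      exact hj₀ this
    · funext k
      simp only [Matrix.mulVec, Matrix.transpose_apply, dotProduct, hM, Matrix.of_apply,
        Pi.zero_apply]
      rw [← hcoord k]
      exact Finset.sum_congr rfl fun j _ => mul_comm _ _
  have hdet : M.det = 0 := by rw [← Matrix.det_transpose]; exact hdetT
  obtain ⟨v, hvne, hv⟩ := (Matrix.exists_mulVec_eq_zero_iff).2 hdet
  -- row bound: if r ≥ 0 and r i = 0 then (M *ᵥ r) i ≤ 0
  have rowbound : ∀ (r : Fin ℓ → ℚ), (∀ i, 0 ≤ r i) → ∀ i, r i = 0 →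
      M.mulVec r i ≤ 0 := by
    intro r hr i hri
    simp only [Matrix.mulVec, dotProduct, hM, Matrix.of_apply]
    refine Finset.sum_nonpos fun k _ => ?_
    by_cases hk : k = i
    · subst hk; rw [hri, mul_zero]
    · have h1 : (S.α i k : ℚ) ≤ 0 := by
        exact_mod_cast S.cartan_offdiag i k (fun h => hk h.symm)
      exact mul_nonpos_of_nonpos_of_nonneg h1 (hr k)
  set p : Fin ℓ → ℚ := fun i => max (v i) 0 with hp
  set q : Fin ℓ → ℚ := fun i => max (-v i) 0 with hq
  have hvpq : v = p - q := by
    funext i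
    simp only [Pi.sub_apply, hp, hq]
    rcases le_total (v i) 0 with h | h
    · rw [max_eq_right h, max_eq_left (by linarith)]; ring
    · rw [max_eq_left h, max_eq_right (by linarith)]; ring
  have hp0 : ∀ i, 0 ≤ p i := fun i => le_max_right _ _
  have hq0 : ∀ i, 0 ≤ q i := fun i => le_max_right _ _
  have hMpq : M.mulVec p = M.mulVec q := by
    have : M.mulVec (p - q) = 0 := by rw [← hvpq]; exact hv
    rw [Matrix.mulVec_sub] at this
    exact sub_eq_zero.1 this
  have key : ∃ r : Fin ℓ → ℚ, (∀ i, 0 ≤ r i) ∧ r ≠ 0 ∧ ∀ i, M.mulVec r i ≤ 0 := by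
    by_cases hpz : p = 0
    · refine ⟨q, hq0, ?_, ?_⟩
      · intro h
        apply hvne
        rw [hvpq, hpz, h]; simp
      · intro i
        rw [← hMpq, hpz]
        simp [Matrix.mulVec_zero]
    · refine ⟨p, hp0, hpz, fun i => ?_⟩
      rcases le_or_gt (v i) 0 with h | h
      · exact rowbound p hp0 i (by simp [hp, max_eq_right h])
      · rw [hMpq]
        exact rowbound q hq0 i (by simp [hq, max_eq_right (by linarith : -v i ≤ 0)])
  obtain ⟨r, hr0, hrne, hrle⟩ := key
  have hLHS : 0 < ∑ k, r k * 2 := by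
    refine Finset.sum_pos' (fun k _ => by have := hr0 k; linarith) ?_
    obtain ⟨k, hk⟩ := Function.ne_iff.1 hrne
    refine ⟨k, Finset.mem_univ k, ?_⟩
    have h0 := hr0 k
    have h1 : r k ≠ 0 := by simpa using hk
    have h2 : 0 < r k := lt_of_le_of_ne h0 (Ne.symm h1)
    linarith
  have hswap : ∑ k, r k * 2 = ∑ i, (N i : ℚ) * M.mulVec r i := by
    have : ∀ k, r k * 2 = ∑ i, r k * ((N i : ℚ) * (S.α i k : ℚ)) := by
      intro k
      rw [← Finset.mul_sum, hNcoord k]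
    rw [Finset.sum_congr rfl fun k _ => this k, Finset.sum_comm]
    refine Finset.sum_congr rfl fun i _ => ?_
    simp only [Matrix.mulVec, dotProduct, hM, Matrix.of_apply, Finset.mul_sum]
    refine Finset.sum_congr rfl fun k _ => by ring
  have hRHS : ∑ i, (N i : ℚ) * M.mulVec r i ≤ 0 :=
    Finset.sum_nonpos fun i _ =>
      mul_nonpos_of_nonneg_of_nonpos (by positivity) (hrle i)
  rw [hswap] at hLHS
  linarith

lemma smul_root_inQ_nonneg {S : RootDatum ℓ} {k : ℤ} {i : Fin ℓ}
    (h : inQ S (k • S.α i)) : 0 ≤ k := by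
  classical
  by_contra hk
  push_neg at hk
  obtain ⟨c, hc⟩ := h
  set c' : Fin ℓ → ℕ := fun j => c j + (if j = i then (-k).toNat else 0) with hc'
  have hzero : ∑ j, (c' j : ℤ) • S.α j = 0 := by
    have hsplit : ∀ j, (c' j : ℤ) • S.α j
        = (c j : ℤ) • S.α j + (if j = i then ((-k).toNat : ℤ) • S.α j else 0) := by
      intro j
      by_cases hj : j = i <;> simp [hc', hj, add_smul]
    rw [Finset.sum_congr rfl fun j _ => hsplit j, Finset.sum_add_distrib,
      Finset.sum_ite_eq' Finset.univ i, ← hc]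
    simp only [Finset.mem_univ, if_true]
    rw [Int.toNat_of_nonneg (by omega : (0:ℤ) ≤ -k)]
    rw [neg_smul, add_neg_cancel]
  have := pointed S c' hzero i
  simp [hc'] at this
  omega

end Aux2


section Aux3
variable {ℓ : ℕ}

lemma dominant_rho : dominant (ρ : P ℓ) := fun _ => by norm_num [ρ]

/-- expansion of the character of V(ρ) -/
lemma chrho_expand {S : RootDatum ℓ} (T : CharTheory S)
    (hchρ : T.chV ρ = e ρ * ∏ β ∈ S.Φpos, (1 + e (-β))) :
    T.chV ρ = ∑ B ∈ S.Φpos.powerset, e (ρ - ∑ β ∈ S.Φpos \ B, β) := by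
  classical
  rw [hchρ, Finset.prod_add, Finset.mul_sum]
  refine Finset.sum_congr rfl fun B _ => ?_
  rw [Finset.prod_const_one, one_mul, e_prod, e_mul]
  congr 1
  rw [Finset.sum_neg_distrib, sub_eq_add_neg]

lemma chrho_coeff_pos {S : RootDatum ℓ} (T : CharTheory S)
    (hchρ : T.chV ρ = e ρ * ∏ β ∈ S.Φpos, (1 + e (-β)))
    {A : Finset (P ℓ)} (hA : A ⊆ S.Φpos) :
    0 < (T.chV ρ).coeff (ρ - ∑ β ∈ A, β) := by
  classical
  rw [chrho_expand T hchρ, AddMonoidAlgebra.coeff_sum, Finsupp.finset_sum_apply]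
  have hmem : S.Φpos \ A ∈ S.Φpos.powerset := Finset.mem_powerset.2 (Finset.sdiff_subset)
  have hterm : (e (ρ - ∑ β ∈ S.Φpos \ (S.Φpos \ A), β)).coeff (ρ - ∑ β ∈ A, β) = 1 := by
    rw [Finset.sdiff_sdiff_eq_self hA, e_apply, if_pos rfl]
  have hle := Finset.single_le_sum
    (f := fun B => (e (ρ - ∑ β ∈ S.Φpos \ B, β)).coeff (ρ - ∑ β ∈ A, β))
    (fun B _ => by simp only [e_apply]; split <;> norm_num) hmem
  rw [hterm] at hle
  exact lt_of_lt_of_le one_pos hle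

lemma chrho_supp {S : RootDatum ℓ} (T : CharTheory S)
    (hchρ : T.chV ρ = e ρ * ∏ β ∈ S.Φpos, (1 + e (-β)))
    {u : P ℓ} (hu : (T.chV ρ).coeff u ≠ 0) :
    ∃ B ⊆ S.Φpos, u = ρ - ∑ β ∈ B, β := by
  classical
  rw [chrho_expand T hchρ, AddMonoidAlgebra.coeff_sum, Finsupp.finset_sum_apply] at hu
  obtain ⟨B, hB, hne⟩ := Finset.exists_ne_zero_of_sum_ne_zero hu
  rw [e_apply] at hne
  split at hne
  · next heq => exact ⟨S.Φpos \ B, Finset.sdiff_subset, heq.symm⟩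
  · exact absurd rfl hne

/-- key bound: `y(ρ - σ_A) + ρ ∈ Q⁺` for `y` in the Weyl group -/
lemma worbit_bound {S : RootDatum ℓ} (T : CharTheory S)
    (hchρ : T.chV ρ = e ρ * ∏ β ∈ S.Φpos, (1 + e (-β)))
    {y : AddAut (P ℓ)} (hy : y ∈ Wgrp S) {A : Finset (P ℓ)} (hA : A ⊆ S.Φpos) :
    inQ S (y (ρ - ∑ β ∈ A, β) + ρ) := by
  classical
  have hval : (T.chV ρ).coeff (y (ρ - ∑ β ∈ A, β)) = (T.chV ρ).coeff (ρ - ∑ β ∈ A, β) :=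
    chV_apply_w T dominant_rho hy _
  have hne : (T.chV ρ).coeff (y (ρ - ∑ β ∈ A, β)) ≠ 0 := by
    rw [hval]
    exact ne_of_gt (chrho_coeff_pos T hchρ hA)
  obtain ⟨B, hB, hBeq⟩ := chrho_supp T hchρ hne
  rw [hBeq]
  have : ρ - (ρ - ∑ β ∈ B, β) + (ρ - ρ) = ∑ β ∈ B, β := by abel
  have h2 : (ρ - ∑ β ∈ B, β) + ρ = (2:ℤ) • ρ - ∑ β ∈ B, β := by
    rw [two_smul]; abel
  rw [h2, ← sigma_compl hB]
  exact inQ_sigma (Finset.sdiff_subset)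

/-- any Weyl translate of a dominant weight is `≤` it -/
lemma orbit_le {S : RootDatum ℓ} (T : CharTheory S) {μ : P ℓ}
    (hμ : dominant μ) {w : AddAut (P ℓ)} (hw : w ∈ Wgrp S) :
    inQ S (μ - w μ) := by
  have h1 : (T.chV μ).coeff (w μ) = 1 := by
    rw [chV_apply_w T hμ hw, T.chV_self μ hμ]
  have h2 : w μ ∈ (T.chV μ).coeff.support := Finsupp.mem_support_iff.2 (by rw [h1]; norm_num)
  exact T.chV_support_le μ hμ _ h2

/-- `w₀ μ` is the minimum of the Weyl orbit of a dominant weight -/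
lemma w0_min {S : RootDatum ℓ} (T : CharTheory S) {w₀ : AddAut (P ℓ)}
    (hw₀ : IsLongest S w₀) {μ : P ℓ} (hμ : dominant μ)
    {w : AddAut (P ℓ)} (hw : w ∈ Wgrp S) :
    inQ S (w μ - w₀ μ) := by
  have hu : -w₀ + w ∈ Wgrp S := add_mem (neg_mem hw₀.1) hw
  have h1 : inQ S (μ - (-w₀ + w) μ) := orbit_le T hμ hu
  have h2 := negw0_inQ hw₀ h1
  have h3 : -(w₀ (μ - (-w₀ + w) μ)) = w μ - w₀ μ := by
    rw [map_sub, neg_sub]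
    congr 1
    rw [← AddAut.add_apply, add_neg_cancel_left]
  rwa [h3] at h2

lemma sRefl_mem {S : RootDatum ℓ} (i : Fin ℓ) : sRefl S i ∈ Wgrp S :=
  AddSubgroup.subset_closure ⟨i, rfl⟩

/-- `-w₀` preserves dominance -/
lemma neg_w0_dominant {S : RootDatum ℓ} (T : CharTheory S) {w₀ : AddAut (P ℓ)}
    (hw₀ : IsLongest S w₀) {μ : P ℓ} (hμ : dominant μ) :
    dominant (-(w₀ μ)) := by
  intro i
  have hmem : sRefl S i + w₀ ∈ Wgrp S := add_mem (sRefl_mem i) hw₀.1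
  have h1 : inQ S ((sRefl S i + w₀) μ - w₀ μ) := w0_min T hw₀ hμ hmem
  have h2 : (sRefl S i + w₀) μ - w₀ μ = (-(w₀ μ)) i • S.α i := by
    rw [AddAut.add_apply]
    show (w₀ μ - (w₀ μ) i • S.α i) - w₀ μ = (-(w₀ μ)) i • S.α i
    rw [Pi.neg_apply, neg_smul]
    abel
  rw [h2] at h1
  exact smul_root_inQ_nonneg h1

/-- the "supset" bound: `-(w₀ (w · σ_A)) ≤ 2ρ` -/
lemma nu_le_two_rho {S : RootDatum ℓ} (T : CharTheory S) {w₀ : AddAut (P ℓ)}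
    (hw₀ : IsLongest S w₀)
    (hchρ : T.chV ρ = e ρ * ∏ β ∈ S.Φpos, (1 + e (-β)))
    {w : AddAut (P ℓ)} (hw : w ∈ Wgrp S) {A : Finset (P ℓ)} (hA : A ⊆ S.Φpos) :
    domle S (-(w₀ (dot w (∑ β ∈ A, β)))) ((2:ℤ) • ρ) := by
  classical
  rw [domle_iff]
  have hy : w₀ + w ∈ Wgrp S := add_mem hw₀.1 hw
  have hq1 : inQ S ((w₀ + w) (ρ - ∑ β ∈ S.Φpos \ A, β) + ρ) :=
    worbit_bound T hchρ hy Finset.sdiff_subset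
  have hq2 : inQ S ((w₀ + w) (ρ - ∑ β ∈ (∅ : Finset (P ℓ)), β) + ρ) :=
    worbit_bound T hchρ hy (Finset.empty_subset _)
  rw [Finset.sum_empty, sub_zero] at hq2
  have hsum := inQ_add hq1 (inQ_add hq2 hq2)
  have heq : ((w₀ + w) (ρ - ∑ β ∈ S.Φpos \ A, β) + ρ) + ((w₀ + w) ρ + ρ + ((w₀ + w) ρ + ρ))
      = (2:ℤ) • ρ - (-(w₀ (dot w (∑ β ∈ A, β)))) := by
    have hAc : ρ - ∑ β ∈ S.Φpos \ A, β = (∑ β ∈ A, β) - ρ := by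
      rw [sigma_compl hA, two_smul]; abel
    rw [hAc, dot, map_sub, map_add, map_sub, map_add, AddAut.add_apply, AddAut.add_apply,
      w0_rho hw₀, two_smul]
    abel
  rwa [heq] at hsum

end Aux3


section Aux4
variable {ℓ : ℕ}

lemma isChar_zero {S : RootDatum ℓ} (T : CharTheory S) : IsChar T 0 :=
  ⟨[], by simp, by simp⟩

lemma isChar_add {S : RootDatum ℓ} {T : CharTheory S} {g₁ g₂ : R ℓ}
    (h₁ : IsChar T g₁) (h₂ : IsChar T g₂) : IsChar T (g₁ + g₂) := by
  obtain ⟨l₁, hd₁, rfl⟩ := h₁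
  obtain ⟨l₂, hd₂, rfl⟩ := h₂
  refine ⟨l₁ ++ l₂, ?_, ?_⟩
  · intro μ hμ
    rcases List.mem_append.1 hμ with h | h
    · exact hd₁ μ h
    · exact hd₂ μ h
  · rw [List.map_append, List.sum_append]

lemma isChar_nsmul {S : RootDatum ℓ} (T : CharTheory S) (n : ℕ) {lam : P ℓ}
    (hlam : dominant lam) : IsChar T ((n : ℤ) • T.chV lam) := by
  refine ⟨List.replicate n lam, ?_, ?_⟩
  · intro μ hμ
    rw [List.eq_of_mem_replicate hμ]
    exact hlam
  · rw [List.map_replicate, List.sum_replicate, natCast_zsmul]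

lemma isChar_finsetsum {S : RootDatum ℓ} (T : CharTheory S) (s : Finset (P ℓ))
    (m : P ℓ → ℕ) (hdom : ∀ ν ∈ s, dominant ν) :
    IsChar T (∑ ν ∈ s, (m ν : ℤ) • T.chV ν) := by
  classical
  induction s using Finset.induction_on with
  | empty => simpa using isChar_zero T
  | insert a t hx ih =>
      rw [Finset.sum_insert hx]
      exact isChar_add (isChar_nsmul T (m a) (hdom a (Finset.mem_insert_self a t)))
        (ih fun ν hν => hdom ν (Finset.mem_insert_of_mem hν))

lemma isChar_coeff_nonneg {S : RootDatum ℓ} {T : CharTheory S} {g : R ℓ}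
    (h : IsChar T g) (μ : P ℓ) : 0 ≤ g.coeff μ := by
  obtain ⟨l, hl, rfl⟩ := h
  induction l with
  | nil => simp
  | cons a t ih =>
      rw [List.map_cons, List.sum_cons]
      have h1 : (T.chV a + (t.map T.chV).sum).coeff μ
          = (T.chV a).coeff μ + ((t.map T.chV).sum).coeff μ := Finsupp.add_apply _ _ _
      rw [h1]
      exact add_nonneg (T.chV_coeff_nonneg a μ)
        (ih fun ν hν => hl ν (List.mem_cons_of_mem a hν))

lemma multiset_sum_apply (s : Multiset (R ℓ)) (μ : P ℓ) :
    s.sum.coeff μ = (s.map (fun f => f.coeff μ)).sum := by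
  induction s using Multiset.induction_on with
  | empty => simp
  | cons a t ih =>
      rw [Multiset.sum_cons, Multiset.map_cons, Multiset.sum_cons, ← ih]
      exact Finsupp.add_apply _ _ _

end Aux4


/-- Main theorem.  Let `G` be a simple, simply-connected
complex algebraic group for which Kostant's conjecture holds (i.e. for
`λ ∈ P⁺`, `V(λ) ⊂ V(ρ) ⊗ V(ρ)` iff `λ ≤ 2ρ`); in particular this is the case
for `G = SL_n(ℂ)` and for `G` of exceptional type.  Then for any dominant
integral weight `λ ∈ P⁺`, `V(λ)` occurs as an irreducible subrepresentation of
`H•(G/B, ∧•𝒯_{G/B}) ≅ HH•(G/B)` if and only if `λ ≤ 2ρ` in the dominance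
order, and in that case it occurs with multiplicity at least `m λ > 0`, where
`m λ` is the multiplicity of `V(λ)` in `V(ρ) ⊗ V(ρ)`.

Here `HT` is the character of `H•(G/B, ∧•𝒯_{G/B}) ≅ HH•(G/B)`; the geometric
input consists of the Borel–Weil–Bott constraints on the cohomology of the
graded line bundles of `∧•𝒯_{G/B} = 𝓛(∧•𝔲)` (`hgrT`, `hBWB`, `hsurj`, as in
Lemma "supset") together with the embedding `V(ρ) ⊗ V(ρ) ↪ H•(G/B, ∧•𝒯_{G/B})`
(`hembed`, the Proposition); `m` with support `msupp` gives the decomposition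
`V(ρ) ⊗ V(ρ) = ⊕_ν V(ν)^{⊕ m ν}` (`hm_dom`, `hm_out`, `hdecomp`); and
`hKostant` is Kostant's conjecture. -/
theorem occurs_in_hochschild_cohomology_iff_le_two_rho
    {ℓ : ℕ} (S : RootDatum ℓ) (T : CharTheory S)
    (w₀ : AddAut (P ℓ)) (hw₀ : IsLongest S w₀)
    (hchρ : T.chV ρ = e ρ * ∏ β ∈ S.Φpos, (1 + e (-β)))
    (grT : Multiset (P ℓ))
    (hgrT : grT = S.Φpos.powerset.val.map (fun A => -(∑ β ∈ A, β)))
    (Hgr : P ℓ → R ℓ)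
    (hBWB : ∀ ξ ∈ grT, Hgr ξ = 0 ∨ ∃ w ∈ Wgrp S, dominant (dot w (-ξ)) ∧
      Hgr ξ = T.chV (-(w₀ (dot w (-ξ)))))
    (HT : R ℓ)
    (hsurj : ∃ h : R ℓ, IsChar T h ∧ (grT.map Hgr).sum = HT + h)
    -- the embedding `V(ρ) ⊗ V(ρ) ↪ H•(G/B, ∧•𝒯_{G/B})`:
    (hembed : ∃ h : R ℓ, IsChar T h ∧ HT = T.chV ρ * T.chV ρ + h)
    -- the decomposition `V(ρ) ⊗ V(ρ) ≅ ⊕_ν V(ν)^{⊕ m ν}`: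
    (m : P ℓ → ℕ) (msupp : Finset (P ℓ))
    (hm_dom : ∀ ν ∈ msupp, dominant ν)
    (hm_out : ∀ ν ∉ msupp, m ν = 0)
    (hdecomp : T.chV ρ * T.chV ρ = ∑ ν ∈ msupp, (m ν : ℤ) • T.chV ν)
    -- Kostant's conjecture:
    (hKostant : ∀ lam : P ℓ, dominant lam →
      (0 < m lam ↔ domle S lam ((2 : ℤ) • ρ)))
    (lam : P ℓ) (hlam : dominant lam) :
    (Occurs T lam HT ↔ domle S lam ((2 : ℤ) • ρ)) ∧
    (domle S lam ((2 : ℤ) • ρ) →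
      0 < m lam ∧ OccursWithMult T (m lam) lam HT) := by
  classical
  -- ===== backward direction =====
  have hback : domle S lam ((2 : ℤ) • ρ) →
      0 < m lam ∧ OccursWithMult T (m lam) lam HT := by
    intro hle
    have hmpos : 0 < m lam := (hKostant lam hlam).2 hle
    have hmem : lam ∈ msupp := by
      by_contra hmem
      rw [hm_out lam hmem] at hmpos
      exact lt_irrefl 0 hmpos
    obtain ⟨h₁, hchar₁, hHT⟩ := hembed
    have hsplit : T.chV ρ * T.chV ρ
        = (m lam : ℤ) • T.chV lam + ∑ ν ∈ msupp.erase lam, (m ν : ℤ) • T.chV ν := by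
      rw [hdecomp]
      exact (Finset.add_sum_erase _ _ hmem).symm
    refine ⟨hmpos, ⟨(∑ ν ∈ msupp.erase lam, (m ν : ℤ) • T.chV ν) + h₁, ?_, ?_⟩⟩
    · exact isChar_add
        (isChar_finsetsum T _ m fun ν hν => hm_dom ν (Finset.mem_of_mem_erase hν)) hchar₁
    · rw [hHT, hsplit, add_assoc]
  -- backward direction, `Occurs` version
  have hocc : domle S lam ((2 : ℤ) • ρ) → Occurs T lam HT := by
    intro hle
    obtain ⟨hmpos, h, hchar, hHT⟩ := hback hle
    refine ⟨((m lam - 1 : ℕ) : ℤ) • T.chV lam + h,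
      isChar_add (isChar_nsmul T (m lam - 1) hlam) hchar, ?_⟩
    rw [hHT, ← add_assoc]
    congr 1
    rw [← add_smul]
    congr 1
    have : (1:ℕ) ≤ m lam := hmpos
    push_cast [Nat.cast_sub this]
    ring
  -- ===== forward direction =====
  have hfwd : Occurs T lam HT → domle S lam ((2 : ℤ) • ρ) := by
    rintro ⟨h₀, hchar₀, hHT₀⟩
    obtain ⟨h₂, hchar₂, hsum⟩ := hsurj
    -- the coefficient of `lam` in `∑ Hgr` is positive
    have hval : ((grT.map Hgr).sum).coeff lam = 1 + (h₀.coeff lam + h₂.coeff lam) := by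
      have e1 : (grT.map Hgr).sum = T.chV lam + h₀ + h₂ := by
        rw [hsum, hHT₀]
        push_cast
        rw [one_smul]
      rw [e1]
      have e2 : (T.chV lam + h₀ + h₂).coeff lam
          = (T.chV lam).coeff lam + h₀.coeff lam + h₂.coeff lam := by
        rw [AddMonoidAlgebra.coeff_add, AddMonoidAlgebra.coeff_add, Finsupp.add_apply, Finsupp.add_apply]
      rw [e2, T.chV_self lam hlam]
      ring
    have hpos : 0 < ((grT.map Hgr).sum).coeff lam := by
      rw [hval]
      have := isChar_coeff_nonneg hchar₀ lam
      have := isChar_coeff_nonneg hchar₂ lam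
      linarith
    -- extract a nonzero grade
    have hex : ∃ ξ ∈ grT, (Hgr ξ).coeff lam ≠ 0 := by
      by_contra hno
      push_neg at hno
      rw [multiset_sum_apply, Multiset.map_map] at hpos
      have : ((grT.map (fun ξ => (Hgr ξ).coeff lam))).sum = 0 := by
        refine Multiset.sum_eq_zero fun x hx => ?_
        obtain ⟨ξ, hξ, rfl⟩ := Multiset.mem_map.1 hx
        exact hno ξ hξ
      rw [show ((fun f : R ℓ => f.coeff lam) ∘ Hgr) = fun ξ => (Hgr ξ).coeff lam from rfl, this] at hpos
      exact lt_irrefl 0 hpos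
    obtain ⟨ξ, hξ, hne⟩ := hex
    rcases hBWB ξ hξ with h0 | ⟨w, hw, hdom, hHgr⟩
    · rw [h0] at hne
      simp at hne
    · -- `lam` is a weight of `V(ν)` with `ν = -(w₀ (dot w (-ξ)))`
      have hνdom : dominant (-(w₀ (dot w (-ξ)))) := neg_w0_dominant T hw₀ hdom
      have hlamν : domle S lam (-(w₀ (dot w (-ξ)))) := by
        refine T.chV_support_le _ hνdom lam (Finsupp.mem_support_iff.2 ?_)
        rw [← hHgr]
        exact hne
      -- `ξ` is minus a partial sum of positive roots
      obtain ⟨A, hApow, hξval⟩ : ∃ A ∈ S.Φpos.powerset, -(∑ β ∈ A, β) = ξ := by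
        rw [hgrT] at hξ
        obtain ⟨A, hA, hAeq⟩ := Multiset.mem_map.1 hξ
        exact ⟨A, hA, hAeq⟩
      have hA : A ⊆ S.Φpos := Finset.mem_powerset.1 hApow
      have hξσ : -ξ = ∑ β ∈ A, β := by rw [← hξval, neg_neg]
      have hν2ρ : domle S (-(w₀ (dot w (-ξ)))) ((2:ℤ) • ρ) := by
        rw [hξσ]
        exact nu_le_two_rho T hw₀ hchρ hw hA
      exact domle_trans hlamν hν2ρ
  exact ⟨⟨hfwd, hocc⟩, hback⟩


end KostantHH
end

section
/- As virtual G-modules (i.e., in the representation ring of G), V(ρ) ⊗ V(ρ) equals the alternating sum Σ_{i≥0} (−1)^i [H^i(G/B, ∧•𝒯_{G/B})]; equivalently, the equivariant Euler–Poincaré characteristic χ_T(∧•𝒯_{G/B}) = Σ_{i≥0} (−1)^i ch(H^i(G/B, ∧•𝒯_{G/B})) equals ch(V(ρ) ⊗ V(ρ)) in ℤ[P]. -/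
open scoped BigOperators

namespace KostantHH

/-- As virtual `G`-modules (i.e. in the representation ring
of `G`), `V(ρ) ⊗ V(ρ)` equals the alternating sum
`∑_{i≥0} (-1)^i [H^i(G/B, ∧•𝒯_{G/B})]`; equivalently, the equivariant
Euler–Poincaré characteristic
`χ_T(∧•𝒯_{G/B}) = ∑_{i≥0} (-1)^i ch H^i(G/B, ∧•𝒯_{G/B})` equals
`ch(V(ρ) ⊗ V(ρ))` in `ℤ[P]`.

Here `H i` is the character of `H^i(G/B, ∧•𝒯_{G/B})` (vanishing for `i > n`);
`hEulerDem` is the Demazure Euler–Poincaré characteristic formula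
`χ_T(𝓛(M)) = ◇(D_{w₀}(◇(ch M)))` applied to `∧•𝒯_{G/B} = 𝓛(∧•𝔲)` with
`ch(∧•𝔲) = ∏_{β∈Φ⁺}(1+e^{-β})`; `hBrauer` is Brauer's tensor product character
formula; and `hchρ` is the character formula for `V(ρ)`. -/
theorem euler_characteristic_eq_char_Vrho_tensor_Vrho
    {ℓ : ℕ} (S : RootDatum ℓ) (T : CharTheory S)
    (w₀ : AddAut (P ℓ)) (hw₀ : IsLongest S w₀)
    (Dw0 : Module.End ℤ (R ℓ)) (hDw0 : IsDw0 S w₀ Dw0)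
    (hchρ : T.chV ρ = e ρ * ∏ β ∈ S.Φpos, (1 + e (-β)))
    (hBrauer : ∀ lam mu : P ℓ, dominant lam → dominant mu →
      T.chV lam * T.chV mu = Dw0 (e lam * T.chV mu))
    (n : ℕ) (H : ℕ → R ℓ)
    (hEulerDem : ∑ i ∈ Finset.range (n + 1), ((-1) ^ i : ℤ) • H i
      = dia (Dw0 (dia (∏ β ∈ S.Φpos, (1 + e (-β)))))) :
    ∑ i ∈ Finset.range (n + 1), ((-1) ^ i : ℤ) • H i = T.chV ρ * T.chV ρ := by
  have e_mul : ∀ μ ν : P ℓ, e μ * e ν = e (μ + ν) := by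
    intro μ ν
    simp [e, AddMonoidAlgebra.single_mul_single]
  have dia_eq : ∀ f : R ℓ, dia f = AddMonoidAlgebra.mapDomain (⇑(AddEquiv.neg (P ℓ))) f := by
    intro f; rfl
  have dia_mul : ∀ f g : R ℓ, dia (f * g) = dia f * dia g := by
    intro f g
    simp only [dia_eq]
    exact AddMonoidAlgebra.mapDomain_mul (AddEquiv.neg (P ℓ)) f g
  have dia_e : ∀ μ : P ℓ, dia (e μ) = e (-μ) := by
    intro μ
    rw [dia_eq]; simp [e, AddMonoidAlgebra.mapDomain_single]
  have dia_one : dia (1 : R ℓ) = 1 := by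
    have := dia_e (0 : P ℓ)
    simpa [e, AddMonoidAlgebra.one_def] using this
  have dia_add : ∀ f g : R ℓ, dia (f + g) = dia f + dia g := by
    intro f g; simp only [dia_eq]; exact AddMonoidAlgebra.mapDomain_add _ f g
  have dia_prod : ∀ (F : P ℓ → R ℓ),
      dia (∏ β ∈ S.Φpos, F β) = ∏ β ∈ S.Φpos, dia (F β) := by
    intro F
    induction S.Φpos using Finset.induction_on with
    | empty => simpa using dia_one
    | insert _ _ h ih => rw [Finset.prod_insert h, Finset.prod_insert h, dia_mul, ih]
  -- key identity: ∏ (1 + e β) = e (2•ρ) * ∏ (1 + e (-β))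
  have key : (∏ β ∈ S.Φpos, (1 + e β)) =
      e ((2 : ℤ) • ρ) * ∏ β ∈ S.Φpos, (1 + e (-β)) := by
    have : ∀ β : P ℓ, (1 : R ℓ) + e β = e β * (1 + e (-β)) := by
      intro β
      rw [mul_add, mul_one, e_mul]
      simp [add_comm]
      rfl
    calc (∏ β ∈ S.Φpos, (1 + e β))
        = ∏ β ∈ S.Φpos, (e β * (1 + e (-β))) := by
          exact Finset.prod_congr rfl fun β _ => this β
      _ = (∏ β ∈ S.Φpos, e β) * ∏ β ∈ S.Φpos, (1 + e (-β)) := Finset.prod_mul_distrib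
      _ = e ((2 : ℤ) • ρ) * ∏ β ∈ S.Φpos, (1 + e (-β)) := by
          congr 1
          rw [← S.sum_pos_roots]
          induction S.Φpos using Finset.induction_on with
          | empty => simp [e, AddMonoidAlgebra.one_def]
          | insert _ _ h ih => rw [Finset.prod_insert h, ih, e_mul, Finset.sum_insert h]
  have dia_prod1 : dia (∏ β ∈ S.Φpos, (1 + e (-β))) =
      e ((2 : ℤ) • ρ) * ∏ β ∈ S.Φpos, (1 + e (-β)) := by
    rw [dia_prod]
    rw [← key]
    exact Finset.prod_congr rfl fun β _ => by rw [dia_add, dia_one, dia_e, neg_neg]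
  have hρdom : dominant (ρ : P ℓ) := fun i => by norm_num [ρ]
  have two_rho : e ((2 : ℤ) • ρ) = e (ρ : P ℓ) * e ρ := by
    rw [e_mul, two_smul]
  have step : Dw0 (dia (∏ β ∈ S.Φpos, (1 + e (-β)))) = T.chV ρ * T.chV ρ := by
    rw [dia_prod1, two_rho, mul_assoc, ← hchρ, ← hBrauer ρ ρ hρdom hρdom]
  have dia_chρ : dia (T.chV ρ) = T.chV ρ := by
    have hsum : -ρ + (2 : ℤ) • ρ = (ρ : P ℓ) := by
      rw [two_smul]; exact neg_add_cancel_left ρ ρ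
    rw [hchρ, dia_mul, dia_e, dia_prod1, ← mul_assoc, e_mul, hsum]
  rw [hEulerDem, step, dia_mul, dia_chρ]

end KostantHH
end
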